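/- For a formula φ, let f_count(φ) denote the number of assignments satisfying φ. Then for every assignment a ∈ {0,1}^n, E_{φ ∼ D_pa(m,n,k,a)}[f_count(φ)] = Σ_{i=0}^{n} C(n,i)·(1 − (1 − (1 − i/n)^k)/(2^k − 1))^m. -/

import Mathlib

open scoped Classical
open Finset

/-- An assignment of `n` Boolean variables. -/
abbrev Assignment (n : ℕ) := Fin n → Bool

/-- A clause: an ordered `k`-tuple of literals, each a variable index together with a sign. -/
abbrev Clause (n k : ℕ) := Fin k → Fin n × Bool

/-- A formula: an ordered `m`-tuple of clauses. -/
abbrev Formula (n k m : ℕ) := Fin m → Clause n k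

/-- An assignment satisfies a clause if it satisfies at least one literal of the clause. -/
def SatClause {n k : ℕ} (v : Assignment n) (c : Clause n k) : Prop :=
  ∃ i, v (c i).1 = (c i).2

/-- An assignment satisfies a formula if it satisfies every clause. -/
def SatFormula {n k m : ℕ} (v : Assignment n) (φ : Formula n k m) : Prop :=
  ∀ j, SatClause v (φ j)

/-- The number of clauses of `φ` satisfied by `v`. -/
noncomputable def numSat {n k m : ℕ} (φ : Formula n k m) (v : Assignment n) : ℕ :=
  (Finset.univ.filter fun j => SatClause v (φ j)).card

/-- The number of clauses of `φ` left unsatisfied by `v`. -/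
noncomputable def numUnsat {n k m : ℕ} (φ : Formula n k m) (v : Assignment n) : ℕ :=
  (Finset.univ.filter fun j => ¬ SatClause v (φ j)).card

/-- Let `f_count(φ)` be the number of satisfying assignments of `φ`.  For
every assignment `a`, the expectation of `f_count(φ)` for `φ` drawn from the planted
distribution `D_pa(m,n,k,a)` (uniform over formulas with `m` clauses all satisfied by `a`)
equals `Σ_{i=0}^n C(n,i)·(1 − (1 − (1 − i/n)^k)/(2^k − 1))^m`. -/
lemma card_falsified {n : ℕ} (v : Fin n → Bool) :
    ((univ : Finset (Fin n × Bool)).filter fun p => ¬ (v p.1 = p.2)).card = n := by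
  have e : ((univ : Finset (Fin n × Bool)).filter fun p => ¬ (v p.1 = p.2))
      = univ.image fun x : Fin n => (x, !v x) := by
    ext p
    obtain ⟨x, b⟩ := p
    simp only [mem_filter, mem_univ, true_and, mem_image, Prod.mk.injEq]
    constructor
    · intro hb; exact ⟨x, rfl, by revert hb; cases v x <;> cases b <;> simp⟩
    · rintro ⟨y, rfl, rfl⟩; cases v y <;> simp
  rw [e, Finset.card_image_of_injective _ (fun x y hxy => (Prod.mk.injEq ..).mp hxy |>.1)]
  simp

lemma card_falsified_both {n : ℕ} (u v : Fin n → Bool) :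
    ((univ : Finset (Fin n × Bool)).filter fun p => ¬ (u p.1 = p.2) ∧ ¬ (v p.1 = p.2)).card
      = ((univ : Finset (Fin n)).filter fun x => u x = v x).card := by
  have e : ((univ : Finset (Fin n × Bool)).filter fun p => ¬ (u p.1 = p.2) ∧ ¬ (v p.1 = p.2))
      = (univ.filter fun x => u x = v x).image fun x : Fin n => (x, !u x) := by
    ext p
    obtain ⟨x, b⟩ := p
    simp only [mem_filter, mem_univ, true_and, mem_image, Prod.mk.injEq]
    constructor
    · rintro ⟨h1, h2⟩
      refine ⟨x, ?_, rfl, ?_⟩ <;> revert h1 h2 <;> cases u x <;> cases v x <;> cases b <;> simp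
    · rintro ⟨y, hy, rfl, rfl⟩
      constructor <;> [skip; rw [← hy]] <;> cases u y <;> simp
  rw [e, Finset.card_image_of_injective _ (fun x y hxy => (Prod.mk.injEq ..).mp hxy |>.1)]

lemma card_dist_fiber {n : ℕ} (a : Fin n → Bool) (i : ℕ) :
    ((univ : Finset (Fin n → Bool)).filter fun v =>
        ((univ : Finset (Fin n)).filter fun x => ¬ a x = v x).card = i).card = n.choose i := by
  classical
  rw [show n.choose i = ((univ : Finset (Fin n)).powersetCard i).card by
    simp [Finset.card_powersetCard]]
  apply Finset.card_bij' (i := fun v _ => (univ : Finset (Fin n)).filter fun x => ¬ a x = v x)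
      (j := fun s _ => fun x => if x ∈ s then !a x else a x)
  · intro v hv
    simp only [mem_filter, mem_univ, true_and] at hv
    simp [Finset.mem_powersetCard, hv]
  · intro s hs
    simp only [Finset.mem_powersetCard] at hs
    simp only [mem_filter, mem_univ, true_and]
    rw [← hs.2]
    congr 1
    ext x
    by_cases hx : x ∈ s <;> simp [hx]
  · intro v hv
    funext x
    by_cases hx : a x = v x <;> simp [hx]
    · revert hx; cases a x <;> cases v x <;> simp
  · intro s hs
    ext x
    by_cases hx : x ∈ s <;> simp [hx]

theorem planted_expected_sat_count (n k m : ℕ) (hn : 0 < n) (hk : 0 < k) (hm : 0 < m)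
    (a : Assignment n)
    (fcount : Formula n k m → ℕ)
    (hfcount : ∀ φ, fcount φ = ((univ : Finset (Assignment n)).filter fun v =>
        SatFormula v φ).card) :
    let Pform : Finset (Formula n k m) := univ.filter fun φ => SatFormula a φ
    (∑ φ ∈ Pform, (fcount φ : ℝ)) / (Pform.card : ℝ)
      = ∑ i ∈ Finset.range (n + 1),
          (n.choose i : ℝ) * (1 - (1 - (1 - (i : ℝ) / n) ^ k) / (2 ^ k - 1)) ^ m := by
  intro Pform
  -- basic nonvanishing facts
  have hn' : (n : ℝ) ≠ 0 := Nat.cast_ne_zero.mpr hn.ne'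
  have h2k : (2:ℝ) ≤ 2 ^ k := by
    calc (2:ℝ) = 2 ^ 1 := (pow_one 2).symm
    _ ≤ 2 ^ k := pow_le_pow_right₀ one_le_two hk
  have h2k' : (2:ℝ) ^ k - 1 ≠ 0 := by linarith
  -- cardinality of the set of clauses satisfied by a given assignment
  have hclause : ∀ v : Assignment n,
      ((univ : Finset (Clause n k)).filter fun c => ¬ SatClause v c).card = n ^ k := by
    intro v
    have e : ((univ : Finset (Clause n k)).filter fun c => ¬ SatClause v c)
        = Fintype.piFinset (fun _ : Fin k =>
            (univ : Finset (Fin n × Bool)).filter fun p => ¬ (v p.1 = p.2)) := by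
      ext c; simp [SatClause, Fintype.mem_piFinset]
    rw [e, Fintype.card_piFinset]
    simp [card_falsified v]
  have hCuniv : (univ : Finset (Clause n k)).card = 2 ^ k * n ^ k := by
    simp [Finset.card_univ, mul_pow, Nat.mul_comm]
  -- number of clauses satisfied simultaneously by a and v
  set Nboth : Assignment n → ℕ := fun v =>
    ((univ : Finset (Clause n k)).filter fun c => SatClause a c ∧ SatClause v c).card with hNboth
  set agg : Assignment n → ℕ := fun v =>
    ((univ : Finset (Fin n)).filter fun x => a x = v x).card with hagg
  set dist : Assignment n → ℕ := fun v =>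
    ((univ : Finset (Fin n)).filter fun x => ¬ a x = v x).card with hdist
  have had : ∀ v, agg v + dist v = n := by
    intro v
    have := Finset.card_filter_add_card_filter_not
      (s := (univ : Finset (Fin n))) (p := fun x => a x = v x)
    simpa [hagg, hdist, Finset.card_univ] using this
  have hdistle : ∀ v, dist v ≤ n := fun v => le_trans (Nat.le_add_left _ _) (had v).le
  have hkey : ∀ v, Nboth v + n ^ k + n ^ k = 2 ^ k * n ^ k + (agg v) ^ k := by
    intro v
    have h1 : Nboth v + ((univ : Finset (Clause n k)).filter
        fun c => ¬ (SatClause a c ∧ SatClause v c)).card = 2 ^ k * n ^ k := by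
      rw [← hCuniv, hNboth]
      exact Finset.card_filter_add_card_filter_not _
    have h2 : ((univ : Finset (Clause n k)).filter fun c => ¬ (SatClause a c ∧ SatClause v c))
        = ((univ : Finset (Clause n k)).filter fun c => ¬ SatClause a c)
          ∪ ((univ : Finset (Clause n k)).filter fun c => ¬ SatClause v c) := by
      ext c; by_cases h : SatClause a c <;> simp [h]
    have h3 := Finset.card_union_add_card_inter
      ((univ : Finset (Clause n k)).filter fun c => ¬ SatClause a c)
      ((univ : Finset (Clause n k)).filter fun c => ¬ SatClause v c)
    have h4 : (((univ : Finset (Clause n k)).filter fun c => ¬ SatClause a c)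
        ∩ ((univ : Finset (Clause n k)).filter fun c => ¬ SatClause v c)).card
        = (agg v) ^ k := by
      have e : (((univ : Finset (Clause n k)).filter fun c => ¬ SatClause a c)
          ∩ ((univ : Finset (Clause n k)).filter fun c => ¬ SatClause v c))
          = Fintype.piFinset (fun _ : Fin k =>
              (univ : Finset (Fin n × Bool)).filter fun p =>
                ¬ (a p.1 = p.2) ∧ ¬ (v p.1 = p.2)) := by
        ext c; simp [SatClause, forall_and, Finset.mem_inter, Fintype.mem_piFinset]
      rw [e, Fintype.card_piFinset]
      simp [card_falsified_both a v, hagg]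
    rw [h2] at h1
    rw [hclause a, hclause v, h4] at h3
    omega
  -- count of planted formulas
  have hPmem : ∀ φ, φ ∈ Pform ↔ SatFormula a φ :=
    fun φ => Finset.mem_filter.trans (and_iff_right (mem_univ φ))
  have hPcard : Pform.card = ((2 ^ k - 1) * n ^ k) ^ m := by
    have hSa : ((univ : Finset (Clause n k)).filter fun c => SatClause a c).card
        = (2 ^ k - 1) * n ^ k := by
      have h1 := Finset.card_filter_add_card_filter_not
        (s := (univ : Finset (Clause n k))) (p := fun c => SatClause a c)
      rw [hclause a, hCuniv] at h1
      have h2 : 1 ≤ 2 ^ k := Nat.one_le_two_pow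
      rw [Nat.sub_mul, one_mul]
      omega
    rw [← hSa]
    have e : Pform = Fintype.piFinset (fun _ : Fin m =>
        (univ : Finset (Clause n k)).filter fun c => SatClause a c) := by
      ext φ; simp only [hPmem, Fintype.mem_piFinset, mem_filter, mem_univ, true_and, SatFormula]
    rw [e, Fintype.card_piFinset]
    simp
  -- count of planted formulas satisfied by v
  have hPv : ∀ v : Assignment n,
      (Pform.filter fun φ => SatFormula v φ).card = Nboth v ^ m := by
    intro v
    have e : (Pform.filter fun φ => SatFormula v φ)
        = Fintype.piFinset (fun _ : Fin m =>
            (univ : Finset (Clause n k)).filter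
              fun c => SatClause a c ∧ SatClause v c) := by
      ext φ
      rw [Finset.mem_filter, hPmem, Fintype.mem_piFinset]
      simp only [mem_filter, mem_univ, true_and,
        Fintype.mem_piFinset, SatFormula]
      constructor
      · rintro ⟨h1, h2⟩ j; exact ⟨h1 j, h2 j⟩
      · intro h; exact ⟨fun j => (h j).1, fun j => (h j).2⟩
    rw [e, Fintype.card_piFinset]
    simp [hNboth]
  -- swap sums
  have hswap : ∑ φ ∈ Pform, fcount φ = ∑ v : Assignment n, Nboth v ^ m := by
    calc ∑ φ ∈ Pform, fcount φ
        = ∑ φ ∈ Pform, ∑ v : Assignment n, if SatFormula v φ then 1 else 0 := by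
          refine Finset.sum_congr rfl fun φ _ => ?_
          rw [hfcount φ, Finset.card_filter]
      _ = ∑ v : Assignment n, ∑ φ ∈ Pform, if SatFormula v φ then 1 else 0 :=
          Finset.sum_comm
      _ = ∑ v : Assignment n, (Pform.filter fun φ => SatFormula v φ).card := by
          refine Finset.sum_congr rfl fun v _ => ?_
          rw [Finset.card_filter]
      _ = ∑ v : Assignment n, Nboth v ^ m := by
          exact Finset.sum_congr rfl fun v _ => hPv v
  -- the real-valued per-assignment term
  have hterm : ∀ v : Assignment n,
      (Nboth v : ℝ) ^ m / (Pform.card : ℝ)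
        = (1 - (1 - (1 - (dist v : ℝ) / n) ^ k) / (2 ^ k - 1)) ^ m := by
    intro v
    have hb : (Nboth v : ℝ) = 2 ^ k * n ^ k - 2 * n ^ k + (agg v : ℝ) ^ k := by
      have := hkey v
      have := congrArg (fun t : ℕ => (t : ℝ)) this
      push_cast at this
      linarith
    have haggr : (agg v : ℝ) = (n : ℝ) - (dist v : ℝ) := by
      have := had v
      have := congrArg (fun t : ℕ => (t : ℝ)) this
      push_cast at this
      linarith
    have hD : (Pform.card : ℝ) = (((2:ℝ) ^ k - 1) * (n : ℝ) ^ k) ^ m := by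
      rw [hPcard]
      have h2 : 1 ≤ 2 ^ k := Nat.one_le_two_pow
      push_cast [Nat.cast_sub h2]
      ring
    have hDbase : ((2:ℝ) ^ k - 1) * (n : ℝ) ^ k ≠ 0 := by
      apply mul_ne_zero h2k' (pow_ne_zero _ hn')
    rw [hD, ← div_pow]
    congr 1
    rw [hb, haggr]
    field_simp
    have key : (n : ℝ) ^ k * (((n : ℝ) - dist v) / n) ^ k
        = ((n : ℝ) - dist v) ^ k := by
      rw [← mul_pow]; congr 1; field_simp
    linear_combination (-1 : ℝ) * key
  -- put everything together
  have hmaps : ∀ v ∈ (univ : Finset (Assignment n)), dist v ∈ Finset.range (n + 1) := by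
    intro v _
    exact Finset.mem_range.mpr (Nat.lt_succ_of_le (hdistle v))
  calc (∑ φ ∈ Pform, (fcount φ : ℝ)) / (Pform.card : ℝ)
      = ∑ v : Assignment n, (Nboth v : ℝ) ^ m / (Pform.card : ℝ) := by
        rw [← Finset.sum_div]
        congr 1
        rw [← Nat.cast_sum, hswap]
        push_cast
        rfl
    _ = ∑ v : Assignment n, (1 - (1 - (1 - (dist v : ℝ) / n) ^ k) / (2 ^ k - 1)) ^ m := by
        exact Finset.sum_congr rfl fun v _ => hterm v
    _ = ∑ i ∈ Finset.range (n + 1), ∑ v ∈ (univ : Finset (Assignment n)).filter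
          (fun v => dist v = i),
          (1 - (1 - (1 - (dist v : ℝ) / n) ^ k) / (2 ^ k - 1)) ^ m :=
        (Finset.sum_fiberwise_of_maps_to hmaps _).symm
    _ = ∑ i ∈ Finset.range (n + 1),
          (n.choose i : ℝ) * (1 - (1 - (1 - (i : ℝ) / n) ^ k) / (2 ^ k - 1)) ^ m := by
        refine Finset.sum_congr rfl fun i _ => ?_
        rw [Finset.sum_congr rfl (fun v hv => by
          rw [(Finset.mem_filter.mp hv).2]),
          Finset.sum_const, card_dist_fiber, nsmul_eq_mul]
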